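/- arXiv:0803.1029 — 2 statements merged into one kernel-verified Lean document; each statement's English description precedes it below -/
import Mathlib

section
/- Let (A, 𝒜) be a measurable space, α a finite nonzero measure on A, and let X = (X_n)_{n≥1} be a Pólya sequence with parameter α, i.e. for every k ≥ 1, P(X_1 ∈ da_1, …, X_k ∈ da_k) = ∏_{i=1}^k (α(da_i) + Σ_{l=1}^{i-1} δ_{a_l}(da_i)) / (α(A) + i - 1). Then for every n ≥ 1 the law of (X_1, …, X_n) is exchangeable: it is invariant under every permutation of the coordinates. -/
open MeasureTheory

variable {A : Type*} [MeasurableSpace A]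

/-- The joint law of the first `n` instants of a Pólya sequence with parameter `α`:
`P(X_1 ∈ da_1, …, X_n ∈ da_n) = ∏_{i=1}^n (α(da_i) + Σ_{l<i} δ_{a_l}(da_i))/(α(A)+i-1)`,
defined recursively: the `(n+1)`-st coordinate, given the first `n`, has law
`(α + Σ_{l≤n} δ_{a_l})/(α(A)+n)`. -/
noncomputable def polyaMeasure (α : Measure A) : (n : ℕ) → Measure (Fin n → A)
  | 0 => Measure.dirac (fun i => i.elim0)
  | (n + 1) =>
      (polyaMeasure α n).bind (fun a =>
        ((α Set.univ + n)⁻¹ •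
            (α + ∑ i : Fin n, Measure.dirac (a i))).map (Fin.snoc a))

open scoped ENNReal


namespace PolyaAux

variable {A : Type*} [MeasurableSpace A]
variable {B C D : Type*} [MeasurableSpace B] [MeasurableSpace C] [MeasurableSpace D]

lemma measurable_snoc {n : ℕ} :
    Measurable (fun p : (Fin n → A) × A => (Fin.snoc p.1 p.2 : Fin (n + 1) → A)) := by
  refine measurable_pi_iff.2 fun j => ?_
  induction j using Fin.lastCases with
  | last => simpa only [Fin.snoc_last] using measurable_snd
  | cast i => simp only [Fin.snoc_castSucc]; exact (measurable_pi_apply i).comp measurable_fst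

lemma measurable_snoc_left {n : ℕ} (a : Fin n → A) :
    Measurable (fun x : A => (Fin.snoc a x : Fin (n + 1) → A)) :=
  measurable_snoc.comp (measurable_const.prodMk measurable_id)

lemma measurable_add_meas {κ₁ κ₂ : B → Measure C} (h₁ : Measurable κ₁) (h₂ : Measurable κ₂) :
    Measurable (fun b => κ₁ b + κ₂ b) := by
  refine Measure.measurable_of_measurable_coe _ fun s hs => ?_
  simp only [Measure.coe_add, Pi.add_apply]
  exact ((Measure.measurable_coe hs).comp h₁).add ((Measure.measurable_coe hs).comp h₂)

lemma measurable_smul_meas (c : ℝ≥0∞) {κ : B → Measure C} (hκ : Measurable κ) :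
    Measurable (fun b => c • κ b) := by
  refine Measure.measurable_of_measurable_coe _ fun s hs => ?_
  simp only [Measure.smul_apply, smul_eq_mul]
  exact ((Measure.measurable_coe hs).comp hκ).const_mul c

lemma map_bind (μ : Measure B) {κ : B → Measure C} (hκ : Measurable κ)
    {g : C → D} (hg : Measurable g) :
    (μ.bind κ).map g = μ.bind (fun b => (κ b).map g) := by
  have hm : Measurable (fun b => (κ b).map g) := (Measure.measurable_map g hg).comp hκ
  ext s hs
  rw [Measure.map_apply hg hs, Measure.bind_apply (hg hs) hκ.aemeasurable, Measure.bind_apply hs hm.aemeasurable]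
  refine lintegral_congr fun b => ?_
  rw [Measure.map_apply hg hs]

lemma bind_map (μ : Measure B) {g : B → C} (hg : Measurable g)
    {κ : C → Measure D} (hκ : Measurable κ) :
    (μ.map g).bind κ = μ.bind (fun b => κ (g b)) := by
  have hcoe : ∀ {s : Set D}, MeasurableSet s → Measurable (fun c : C => κ c s) :=
    fun hs => (Measure.measurable_coe hs).comp hκ
  have hm : Measurable (fun b => κ (g b)) := hκ.comp hg
  ext s hs
  rw [Measure.bind_apply hs hκ.aemeasurable, lintegral_map (hcoe hs) hg, Measure.bind_apply hs hm.aemeasurable]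

lemma bind_smul (c : ℝ≥0∞) (μ : Measure B) {κ : B → Measure C} (hκ : Measurable κ) :
    μ.bind (fun b => c • κ b) = c • μ.bind κ := by
  ext s hs
  have hcoe : Measurable (fun b : B => κ b s) := (Measure.measurable_coe hs).comp hκ
  rw [Measure.bind_apply hs (measurable_smul_meas c hκ).aemeasurable, Measure.smul_apply, smul_eq_mul,
    Measure.bind_apply hs hκ.aemeasurable]
  simp only [Measure.smul_apply, smul_eq_mul]
  rw [lintegral_const_mul c hcoe]

lemma smul_bind (c : ℝ≥0∞) (μ : Measure B) {κ : B → Measure C} (hκ : Measurable κ) :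
    (c • μ).bind κ = c • μ.bind κ := by
  ext s hs
  rw [Measure.bind_apply hs hκ.aemeasurable, Measure.smul_apply, smul_eq_mul,
    Measure.bind_apply hs hκ.aemeasurable, lintegral_smul_measure, smul_eq_mul]

lemma bind_add (μ : Measure B) {κ₁ κ₂ : B → Measure C}
    (h₁ : Measurable κ₁) (h₂ : Measurable κ₂) :
    μ.bind (fun b => κ₁ b + κ₂ b) = μ.bind κ₁ + μ.bind κ₂ := by
  ext s hs
  have hc1 : Measurable (fun b : B => κ₁ b s) := (Measure.measurable_coe hs).comp h₁
  rw [Measure.bind_apply hs (measurable_add_meas h₁ h₂).aemeasurable, Measure.add_apply,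
    Measure.bind_apply hs h₁.aemeasurable, Measure.bind_apply hs h₂.aemeasurable, ← lintegral_add_left hc1]
  simp only [Measure.coe_add, Pi.add_apply]


variable {A : Type*} [MeasurableSpace A]

noncomputable def baseM (α : Measure A) (n : ℕ) (a : Fin n → A) : Measure A :=
  α + ∑ i : Fin n, Measure.dirac (a i)

instance (α : Measure A) [IsFiniteMeasure α] (n : ℕ) (a : Fin n → A) :
    IsFiniteMeasure (baseM α n a) := by
  unfold baseM; infer_instance

noncomputable def stepK (α : Measure A) (n : ℕ) (a : Fin n → A) : Measure (Fin (n + 1) → A) :=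
  ((α Set.univ + n)⁻¹ • baseM α n a).map (Fin.snoc a)

lemma measurable_baseM (α : Measure A) (n : ℕ) : Measurable (baseM α n) := by
  refine Measure.measurable_of_measurable_coe _ fun s hs => ?_
  have : (fun a : Fin n → A => baseM α n a s)
      = fun a => α s + ∑ i : Fin n, Set.indicator s 1 (a i) := by
    funext a
    simp [baseM, Measure.finset_sum_apply, Measure.dirac_apply' _ hs]
  rw [this]
  exact measurable_const.add (Finset.measurable_sum _ fun i _ =>
    (measurable_one.indicator hs).comp (measurable_pi_apply i))

lemma measurable_stepK (α : Measure A) [SFinite α] (n : ℕ) : Measurable (stepK α n) := by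
  refine Measure.measurable_of_measurable_coe _ fun s hs => ?_
  have hsn : ∀ a : Fin n → A, Measurable (fun x : A => (Fin.snoc a x : Fin (n + 1) → A)) :=
    measurable_snoc_left
  have : (fun a : Fin n → A => stepK α n a s) = fun a =>
      (α Set.univ + n)⁻¹ * ((∫⁻ x, s.indicator 1 (Fin.snoc a x) ∂α)
        + ∑ i : Fin n, s.indicator 1 (Fin.snoc a (a i) : Fin (n + 1) → A)) := by
    funext a
    rw [stepK, Measure.map_apply (hsn a) hs, Measure.smul_apply, smul_eq_mul]
    congr 1
    rw [baseM, Measure.add_apply]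
    congr 1
    · rw [← lintegral_indicator_one ((hsn a) hs)]
      refine lintegral_congr fun x => rfl
    · rw [Measure.finset_sum_apply]
      refine Finset.sum_congr rfl fun i _ => ?_
      rw [Measure.dirac_apply' _ ((hsn a) hs)]
      rfl
  rw [this]
  refine (Measurable.add ?_ ?_).const_mul _
  · exact Measurable.lintegral_prod_right'
      ((measurable_one.indicator hs).comp measurable_snoc)
  · exact Finset.measurable_sum _ fun i _ =>
      (measurable_one.indicator hs).comp
        (measurable_snoc.comp (measurable_id.prodMk (measurable_pi_apply i)))

lemma baseM_comp_perm (α : Measure A) (n : ℕ) (τ : Equiv.Perm (Fin n)) (a : Fin n → A) :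
    baseM α n (a ∘ τ) = baseM α n a := by
  unfold baseM
  congr 1
  exact Equiv.sum_comp τ fun i => Measure.dirac (a i)

lemma baseM_snoc (α : Measure A) (m : ℕ) (a : Fin m → A) (x : A) :
    baseM α (m + 1) (Fin.snoc a x) = baseM α m a + Measure.dirac x := by
  unfold baseM
  rw [Fin.sum_univ_castSucc]
  simp [add_assoc]

/-- Restriction of a permutation of `Fin (n+1)` fixing the last element. -/
def restrictLast {n : ℕ} (ρ : Equiv.Perm (Fin (n + 1))) (h : ρ (Fin.last n) = Fin.last n) :
    Equiv.Perm (Fin n) where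
  toFun i := (ρ i.castSucc).castPred (by
    intro he
    exact (Fin.castSucc_lt_last i).ne (ρ.injective (he.trans h.symm)))
  invFun i := (ρ.symm i.castSucc).castPred (by
    intro he
    have : i.castSucc = Fin.last n := by
      have := congrArg ρ he
      rwa [Equiv.apply_symm_apply, h] at this
    exact (Fin.castSucc_lt_last i).ne this)
  left_inv i := by
    apply Fin.castSucc_injective
    rw [Fin.castSucc_castPred, Fin.castSucc_castPred, Equiv.symm_apply_apply]
  right_inv i := by
    apply Fin.castSucc_injective
    rw [Fin.castSucc_castPred, Fin.castSucc_castPred, Equiv.apply_symm_apply]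

lemma castSucc_restrictLast {n : ℕ} (ρ : Equiv.Perm (Fin (n + 1)))
    (h : ρ (Fin.last n) = Fin.last n) (i : Fin n) :
    (restrictLast ρ h i).castSucc = ρ i.castSucc := by
  simp [restrictLast, Fin.castSucc_castPred]

lemma snoc_comp_fixLast {n : ℕ} (ρ : Equiv.Perm (Fin (n + 1)))
    (h : ρ (Fin.last n) = Fin.last n) (a : Fin n → A) (x : A) :
    (Fin.snoc a x : Fin (n + 1) → A) ∘ ρ = Fin.snoc (a ∘ restrictLast ρ h) x := by
  funext j
  induction j using Fin.lastCases with
  | last => simp [Function.comp, h]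
  | cast i =>
      have hi := castSucc_restrictLast ρ h i
      simp only [Function.comp_apply, Fin.snoc_castSucc, ← hi, Fin.snoc_castSucc]

lemma snoc_snoc_comp_swapLast {m : ℕ} (a : Fin m → A) (x y : A) :
    (Fin.snoc (Fin.snoc a x) y : Fin (m + 2) → A) ∘
        (Equiv.swap ((Fin.last m).castSucc) (Fin.last (m + 1)))
      = Fin.snoc (Fin.snoc a y) x := by
  funext j
  induction j using Fin.lastCases with
  | last =>
      simp only [Function.comp_apply, Equiv.swap_apply_right, Fin.snoc_castSucc, Fin.snoc_last]
  | cast i =>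
      induction i using Fin.lastCases with
      | last =>
          simp only [Function.comp_apply, Equiv.swap_apply_left, Fin.snoc_last, Fin.snoc_castSucc]
      | cast i =>
          have h1 : (i.castSucc).castSucc ≠ (Fin.last m).castSucc :=
            fun he => (Fin.castSucc_lt_last i).ne (Fin.castSucc_injective _ he)
          have h2 : (i.castSucc).castSucc ≠ Fin.last (m + 1) :=
            (Fin.castSucc_lt_last _).ne
          simp only [Function.comp_apply, Equiv.swap_apply_of_ne_of_ne h1 h2, Fin.snoc_castSucc]
variable {B : Type*} [MeasurableSpace B]

lemma measurable_map_prod_mk (μ : Measure A) [SFinite μ] :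
    Measurable (fun x : A => μ.map (Prod.mk x)) := by
  refine Measure.measurable_of_measurable_coe _ fun s hs => ?_
  have : (fun x : A => μ.map (Prod.mk x) s) = fun x => ∫⁻ y, s.indicator 1 (x, y) ∂μ := by
    funext x
    rw [Measure.map_apply measurable_prodMk_left hs,
      ← lintegral_indicator_one (measurable_prodMk_left hs)]
    exact lintegral_congr fun y => rfl
  rw [this]
  exact Measurable.lintegral_prod_right' (measurable_one.indicator hs)

lemma pairKernel_eq (μ : Measure A) :
    (fun x : A => (μ + Measure.dirac x).map (Prod.mk x))
      = fun x => μ.map (Prod.mk x) + Measure.dirac (x, x) := by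
  funext x
  rw [Measure.map_add _ _ measurable_prodMk_left, Measure.map_dirac' measurable_prodMk_left]

lemma measurable_pairKernel (μ : Measure A) [SFinite μ] :
    Measurable (fun x : A => (μ + Measure.dirac x).map (Prod.mk x)) := by
  rw [pairKernel_eq]
  have hd : Measurable (fun x : A => Measure.dirac (x, x)) :=
    Measure.measurable_dirac.comp (measurable_id.prodMk measurable_id)
  exact measurable_add_meas (measurable_map_prod_mk μ) hd

lemma bind_pair_symm (μ : Measure A) [IsFiniteMeasure μ] {G : A × A → B} (hG : Measurable G) :
    μ.bind (fun x => (μ + Measure.dirac x).map (fun y => G (x, y)))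
      = μ.bind (fun x => (μ + Measure.dirac x).map (fun y => G (y, x))) := by
  have hpair := measurable_pairKernel μ
  set J := μ.bind (fun x => (μ + Measure.dirac x).map (Prod.mk x)) with hJ
  have hswap : J.map Prod.swap = J := by
    have hdiag : Measurable (fun x : A => (x, x)) := measurable_id.prodMk measurable_id
    have hd : Measurable (fun x : A => Measure.dirac (x, x)) :=
      Measure.measurable_dirac.comp hdiag
    rw [hJ, pairKernel_eq, bind_add μ (measurable_map_prod_mk μ) hd]
    have h1 : μ.bind (fun x => μ.map (Prod.mk x)) = μ.prod μ := (Measure.prod_def μ μ).symm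
    have h2 : μ.bind (fun x => Measure.dirac (x, x)) = μ.map (fun x => (x, x)) :=
      Measure.bind_dirac_eq_map μ hdiag
    rw [h1, h2, Measure.map_add _ _ measurable_swap, Measure.prod_swap,
      Measure.map_map measurable_swap hdiag]
    have : Prod.swap ∘ (fun x : A => (x, x)) = fun x => (x, x) := rfl
    rw [this]
  have hL : μ.bind (fun x => (μ + Measure.dirac x).map (fun y => G (x, y))) = J.map G := by
    rw [hJ, map_bind μ hpair hG]
    congr 1
    funext x
    rw [Measure.map_map hG measurable_prodMk_left]
    rfl
  have hR : μ.bind (fun x => (μ + Measure.dirac x).map (fun y => G (y, x)))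
      = J.map (G ∘ Prod.swap) := by
    rw [hJ, map_bind μ hpair (hG.comp measurable_swap)]
    congr 1
    funext x
    rw [Measure.map_map (hG.comp measurable_swap) measurable_prodMk_left]
    rfl
  rw [hL, hR, ← Measure.map_map hG measurable_swap, hswap]
lemma polyaMeasure_succ (α : Measure A) (n : ℕ) :
    polyaMeasure α (n + 1) = (polyaMeasure α n).bind (stepK α n) := rfl

lemma swapLast_invariant (α : Measure A) [IsFiniteMeasure α] (m : ℕ) :
    (polyaMeasure α (m + 2)).map
        (fun b : Fin (m + 2) → A => b ∘ (Equiv.swap ((Fin.last m).castSucc) (Fin.last (m + 1))))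
      = polyaMeasure α (m + 2) := by
  set sw := Equiv.swap ((Fin.last m).castSucc) (Fin.last (m + 1)) with hswdef
  have hsw : Measurable (fun b : Fin (m + 2) → A => b ∘ sw) :=
    measurable_pi_iff.2 fun i => measurable_pi_apply _
  have hκ₀ := measurable_stepK α m
  have hκ₁ := measurable_stepK α (m + 1)
  have hmeas2 : Measurable (fun a : Fin m → A => (stepK α m a).bind (stepK α (m + 1))) :=
    (Measure.measurable_bind' hκ₁).comp hκ₀
  have hbb : polyaMeasure α (m + 2)
      = (polyaMeasure α m).bind (fun a => (stepK α m a).bind (stepK α (m + 1))) := by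
    rw [polyaMeasure_succ α (m + 1), polyaMeasure_succ α m]
    exact Measure.bind_bind hκ₀.aemeasurable hκ₁.aemeasurable
  rw [hbb, map_bind _ hmeas2 hsw]
  congr 1
  funext a
  set μ := baseM α m a with hμdef
  haveI : IsFiniteMeasure μ := by rw [hμdef]; infer_instance
  have hGmeas : Measurable (fun p : A × A => (Fin.snoc (Fin.snoc a p.1) p.2 : Fin (m + 2) → A)) :=
    measurable_snoc.comp
      ((measurable_snoc.comp (measurable_const.prodMk measurable_fst)).prodMk measurable_snd)
  have hker : Measurable
      (fun x : A => (μ + Measure.dirac x).map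
        (fun y => (Fin.snoc (Fin.snoc a x) y : Fin (m + 2) → A))) := by
    have : (fun x : A => (μ + Measure.dirac x).map
          (fun y => (Fin.snoc (Fin.snoc a x) y : Fin (m + 2) → A)))
        = fun x => ((μ + Measure.dirac x).map (Prod.mk x)).map
            (fun p : A × A => (Fin.snoc (Fin.snoc a p.1) p.2 : Fin (m + 2) → A)) := by
      funext x
      rw [Measure.map_map hGmeas measurable_prodMk_left]
      rfl
    rw [this]
    exact (Measure.measurable_map _ hGmeas).comp (measurable_pairKernel μ)
  have e2 : (fun x : A => stepK α (m + 1) (Fin.snoc a x))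
      = fun x => ((α Set.univ + ((m + 1 : ℕ) : ℝ≥0∞))⁻¹ : ℝ≥0∞) •
          ((μ + Measure.dirac x).map
            (fun y => (Fin.snoc (Fin.snoc a x) y : Fin (m + 2) → A))) := by
    funext x
    rw [stepK, baseM_snoc, Measure.map_smul]
  have e1 : (stepK α m a).bind (stepK α (m + 1))
      = (α Set.univ + (m : ℝ≥0∞))⁻¹ • ((α Set.univ + ((m + 1 : ℕ) : ℝ≥0∞))⁻¹ •
          μ.bind (fun x => (μ + Measure.dirac x).map
            (fun y => (Fin.snoc (Fin.snoc a x) y : Fin (m + 2) → A)))) := by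
    have hsnκ : Measurable (fun x : A => stepK α (m + 1) (Fin.snoc a x)) :=
      hκ₁.comp (measurable_snoc_left a)
    rw [stepK, bind_map _ (measurable_snoc_left a) hκ₁, smul_bind _ _ hsnκ, e2,
      bind_smul _ _ hker]
  rw [e1, Measure.map_smul, Measure.map_smul]
  congr 1
  congr 1
  rw [map_bind _ hker hsw]
  have e4 : (fun x => ((μ + Measure.dirac x).map
        (fun y => (Fin.snoc (Fin.snoc a x) y : Fin (m + 2) → A))).map
          (fun b : Fin (m + 2) → A => b ∘ sw))
      = fun x => (μ + Measure.dirac x).map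
          (fun y => (Fin.snoc (Fin.snoc a y) x : Fin (m + 2) → A)) := by
    funext x
    rw [Measure.map_map hsw (measurable_snoc_left _)]
    congr 1
    funext y
    exact snoc_snoc_comp_swapLast a x y
  rw [e4]
  exact (bind_pair_symm μ hGmeas).symm
lemma comp_perm_measurable {n : ℕ} (σ : Equiv.Perm (Fin n)) :
    Measurable (fun a : Fin n → A => a ∘ σ) :=
  measurable_pi_iff.2 fun _ => measurable_pi_apply _

lemma polya_map_perm (α : Measure A) [IsFiniteMeasure α] :
    ∀ (n : ℕ) (σ : Equiv.Perm (Fin n)),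
      (polyaMeasure α n).map (fun a => a ∘ σ) = polyaMeasure α n := by
  intro n
  induction n with
  | zero =>
      intro σ
      have : (fun a : Fin 0 → A => a ∘ σ) = id := by
        funext a; funext i; exact i.elim0
      rw [this, Measure.map_id]
  | succ n ih =>
      have hmul : ∀ σ₁ σ₂ : Equiv.Perm (Fin (n + 1)),
          (polyaMeasure α (n + 1)).map (fun a => a ∘ σ₁) = polyaMeasure α (n + 1) →
          (polyaMeasure α (n + 1)).map (fun a => a ∘ σ₂) = polyaMeasure α (n + 1) →
          (polyaMeasure α (n + 1)).map (fun a => a ∘ (σ₁ * σ₂)) = polyaMeasure α (n + 1) := by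
        intro σ₁ σ₂ h₁ h₂
        have hc : (fun a : Fin (n + 1) → A => a ∘ (σ₁ * σ₂))
            = (fun a : Fin (n + 1) → A => a ∘ σ₂) ∘ (fun a => a ∘ σ₁) := rfl
        rw [hc, ← Measure.map_map (comp_perm_measurable σ₂) (comp_perm_measurable σ₁), h₁, h₂]
      have fixLast : ∀ ρ : Equiv.Perm (Fin (n + 1)), ρ (Fin.last n) = Fin.last n →
          (polyaMeasure α (n + 1)).map (fun a => a ∘ ρ) = polyaMeasure α (n + 1) := by
        intro ρ h
        set τ := restrictLast ρ h with hτ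
        rw [polyaMeasure_succ, map_bind _ (measurable_stepK α n) (comp_perm_measurable ρ)]
        have hkk : (fun a : Fin n → A => (stepK α n a).map (fun b => b ∘ ρ))
            = fun a => stepK α n (a ∘ τ) := by
          funext a
          rw [stepK, Measure.map_map (comp_perm_measurable ρ) (measurable_snoc_left a)]
          have h1 : (fun b : Fin (n + 1) → A => b ∘ ρ) ∘ (fun x => (Fin.snoc a x : Fin (n + 1) → A))
              = fun x => (Fin.snoc (a ∘ τ) x : Fin (n + 1) → A) := by
            funext x
            exact snoc_comp_fixLast ρ h a x
          rw [h1, stepK, baseM_comp_perm]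
        rw [hkk]
        have hbm : (polyaMeasure α n).bind (fun a => stepK α n (a ∘ τ))
            = ((polyaMeasure α n).map (fun a => a ∘ τ)).bind (stepK α n) := by
          rw [bind_map _ (comp_perm_measurable τ) (measurable_stepK α n)]
        rw [hbm, ih τ, ← polyaMeasure_succ]
      intro σ
      set j := σ⁻¹ (Fin.last n) with hj
      have hswapj : (polyaMeasure α (n + 1)).map (fun a => a ∘ (Equiv.swap j (Fin.last n)))
          = polyaMeasure α (n + 1) := by
        by_cases hjl : j = Fin.last n
        · rw [hjl, Equiv.swap_self]
          have hid : (fun a : Fin (n + 1) → A => a ∘ (Equiv.refl (Fin (n + 1)))) = id := rfl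
          rw [hid, Measure.map_id]
        · cases n with
          | zero => exact absurd (Fin.ext (Nat.lt_one_iff.mp j.isLt)) hjl
          | succ m =>
              set k := (Fin.last m).castSucc with hk
              have hkl : k ≠ Fin.last (m + 1) := (Fin.castSucc_lt_last _).ne
              by_cases hjk : j = k
              · rw [hjk]
                exact swapLast_invariant α m
              · have hfixjk : Equiv.swap j k (Fin.last (m + 1)) = Fin.last (m + 1) :=
                  Equiv.swap_apply_of_ne_of_ne (Ne.symm hjl) (Ne.symm hkl)
                have hconj : Equiv.swap j (Fin.last (m + 1))
                    = Equiv.swap j k * Equiv.swap k (Fin.last (m + 1)) * Equiv.swap j k := by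
                  have h := Equiv.swap_apply_apply (Equiv.swap j k) k (Fin.last (m + 1))
                  rw [Equiv.swap_apply_right, hfixjk, Equiv.swap_inv] at h
                  exact h
                rw [hconj]
                exact hmul _ _ (hmul _ _ (fixLast _ hfixjk) (swapLast_invariant α m))
                  (fixLast _ hfixjk)
      have hρ : (σ * Equiv.swap j (Fin.last n)) (Fin.last n) = Fin.last n := by
        rw [Equiv.Perm.mul_apply, Equiv.swap_apply_right, hj, Equiv.Perm.inv_def, Equiv.apply_symm_apply]
      have hσeq : σ = (σ * Equiv.swap j (Fin.last n)) * Equiv.swap j (Fin.last n) := by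
        rw [mul_assoc, Equiv.swap_mul_self, mul_one]
      rw [hσeq]
      exact hmul _ _ (fixLast _ hρ) hswapj
end PolyaAux

/-- A Pólya sequence with a finite nonzero parameter `α` is exchangeable: for every `n`
and every permutation `σ` of the coordinates, `(X_{σ(1)},…,X_{σ(n)})` has the same law
as `(X_1,…,X_n)`. -/
theorem polya_exchangeable (α : Measure A) [IsFiniteMeasure α] (hα : α ≠ 0)
    {Ω : Type*} [MeasurableSpace Ω] (P : Measure Ω) [IsProbabilityMeasure P]
    (X : ℕ → Ω → A) (hXmeas : ∀ i, Measurable (X i))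
    (hX : ∀ n : ℕ, Measure.map (fun ω (i : Fin n) => X (i + 1) ω) P = polyaMeasure α n) :
    ∀ (n : ℕ) (σ : Equiv.Perm (Fin n)),
      Measure.map (fun ω (i : Fin n) => X (σ i + 1) ω) P =
        Measure.map (fun ω (i : Fin n) => X (i + 1) ω) P := by
  intro n σ
  have hf : Measurable (fun ω : Ω => fun i : Fin n => X (i + 1) ω) :=
    measurable_pi_iff.2 fun i => hXmeas _
  have hg := PolyaAux.comp_perm_measurable (A := A) σ
  have hcomp : (fun ω (i : Fin n) => X (σ i + 1) ω)
      = (fun a : Fin n → A => a ∘ σ) ∘ (fun ω (i : Fin n) => X (i + 1) ω) := rfl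
  rw [hcomp, ← Measure.map_map hg hf, hX n, PolyaAux.polya_map_perm α n σ]
end

section
/- Let X = (X_n)_{n≥1} be a Pólya sequence with parameter α on (A,𝒜). Then for every k ≥ 1 and α-⊗-Pólya-a.e. (a_1,…,a_k) ∈ A^k, the conditional law of (X_{k+n})_{n≥1} given X_1 = a_1, …, X_k = a_k is that of a Pólya sequence with parameter α + Σ_{l=1}^k δ_{a_l}. -/
open MeasureTheory
open scoped ENNReal

variable {A : Type*} [MeasurableSpace A]

section Aux

open ProbabilityTheory

variable {γ B C : Type*} [MeasurableSpace γ] [MeasurableSpace B] [MeasurableSpace C]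

lemma measurable_snoc_uncurry {n : ℕ} :
    Measurable (fun p : (Fin n → A) × A => (Fin.snoc p.1 p.2 : Fin (n + 1) → A)) := by
  refine measurable_pi_lambda _ fun j => ?_
  induction j using Fin.lastCases with
  | last => simpa using measurable_snd
  | cast i => simpa [Function.comp_def] using (measurable_pi_apply i).comp measurable_fst

lemma measurable_append_uncurry {k m : ℕ} :
    Measurable (fun p : (Fin k → A) × (Fin m → A) => Fin.append p.1 p.2) := by
  refine measurable_pi_lambda _ fun j => ?_
  induction j using Fin.addCases with
  | left i => simpa [Function.comp_def] using (measurable_pi_apply i).comp measurable_fst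
  | right i => simpa [Function.comp_def] using (measurable_pi_apply i).comp measurable_snd

lemma measurable_snoc_left {n : ℕ} (a : Fin n → A) :
    Measurable (fun x => (Fin.snoc a x : Fin (n + 1) → A)) :=
  measurable_snoc_uncurry.comp measurable_prodMk_left

lemma measurable_append_left {k m : ℕ} (a : Fin k → A) :
    Measurable (Fin.append a : (Fin m → A) → Fin (k + m) → A) :=
  measurable_append_uncurry.comp measurable_prodMk_left

/-- Measurability of a family of pushforward measures, with both the measure and the map
varying measurably. -/
lemma measurable_map_family {μ : γ → Measure B} {F : γ → B → C}
    (hμ : Measurable μ) (hb : ∀ p, μ p Set.univ ≤ 1)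
    (hF : Measurable (Function.uncurry F)) :
    Measurable fun p => (μ p).map (F p) := by
  have : IsFiniteKernel (⟨μ, hμ⟩ : Kernel γ B) := ⟨⟨1, ENNReal.one_lt_top, hb⟩⟩
  refine Measure.measurable_of_measurable_coe _ fun s hs => ?_
  have h1 : ∀ p, (μ p).map (F p) s = μ p (Prod.mk p ⁻¹' (Function.uncurry F ⁻¹' s)) := by
    intro p
    rw [Measure.map_apply (show Measurable (F p) from hF.comp measurable_prodMk_left) hs]
    rfl
  simp_rw [h1]
  exact Kernel.measurable_kernel_prodMk_left (κ := ⟨μ, hμ⟩) (hF hs)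

/-- Measurability of a family of bound measures, with both the measure and the kernel
varying measurably. -/
lemma measurable_bind_family {μ : γ → Measure B} {g : γ → B → Measure C}
    (hμ : Measurable μ) (hb : ∀ p, μ p Set.univ ≤ 1)
    (hg : Measurable (Function.uncurry g)) :
    Measurable fun p => (μ p).bind (g p) := by
  have : IsFiniteKernel (⟨μ, hμ⟩ : Kernel γ B) := ⟨⟨1, ENNReal.one_lt_top, hb⟩⟩
  refine Measure.measurable_of_measurable_coe _ fun s hs => ?_
  have h1 : ∀ p, (μ p).bind (g p) s = ∫⁻ b, g p b s ∂(μ p) := fun p =>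
    Measure.bind_apply hs (hg.comp measurable_prodMk_left).aemeasurable
  simp_rw [h1]
  exact Measurable.lintegral_kernel_prod_right (κ := ⟨μ, hμ⟩)
    ((Measure.measurable_coe hs).comp hg)

lemma measurable_param_measure {n : ℕ} {β : γ → Measure A} (hβ : Measurable β)
    {g : γ → Fin n → A} (hg : Measurable g) :
    Measurable fun c => (β c + ∑ i : Fin n, Measure.dirac (g c i)) := by
  refine Measure.measurable_of_measurable_coe _ fun s hs => ?_
  simp only [Measure.add_apply, Measure.finset_sum_apply, Measure.dirac_apply' _ hs]
  refine ((Measure.measurable_coe hs).comp hβ).add (Finset.measurable_sum _ fun i _ => ?_)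
  exact (measurable_one.indicator hs).comp ((measurable_pi_apply i).comp hg)

lemma measurable_smul_family {μ : γ → Measure B} (hμ : Measurable μ)
    {x : γ → ℝ≥0∞} (hx : Measurable x) :
    Measurable fun c => x c • μ c := by
  refine Measure.measurable_of_measurable_coe _ fun s hs => ?_
  simp only [Measure.smul_apply, smul_eq_mul]
  exact hx.mul ((Measure.measurable_coe hs).comp hμ)

lemma param_univ {n : ℕ} (α : Measure A) (a : Fin n → A) :
    (α + ∑ i : Fin n, Measure.dirac (a i)) Set.univ = α Set.univ + n := by
  simp [Measure.add_apply, Measure.finset_sum_apply]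

end Aux

section PolyaAux

open ProbabilityTheory

/-- The one-step transition of the Pólya urn. -/
noncomputable def polyaStep (α : Measure A) (n : ℕ) :
    (Fin n → A) → Measure (Fin (n + 1) → A) := fun a =>
  ((α Set.univ + n)⁻¹ • (α + ∑ i : Fin n, Measure.dirac (a i))).map (Fin.snoc a)

lemma polyaMeasure_succ (α : Measure A) (n : ℕ) :
    polyaMeasure α (n + 1) = (polyaMeasure α n).bind (polyaStep α n) := rfl

lemma polyaStep_univ_le (α : Measure A) (n : ℕ) (a : Fin n → A) :
    polyaStep α n a Set.univ ≤ 1 := by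
  rw [polyaStep, Measure.map_apply (measurable_snoc_left a) MeasurableSet.univ,
    Set.preimage_univ, Measure.smul_apply, smul_eq_mul, param_univ]
  exact ENNReal.inv_mul_le_one _

lemma measurable_polyaStep_family {γ : Type*} [MeasurableSpace γ] {β : γ → Measure A}
    (hβ : Measurable β) (n : ℕ) :
    Measurable fun p : γ × (Fin n → A) => polyaStep (β p.1) n p.2 := by
  refine measurable_map_family (F := fun (p : γ × (Fin n → A)) (x : A) => (Fin.snoc p.2 x : Fin (n + 1) → A)) ?_ ?_ ?_
  · refine measurable_smul_family
      (measurable_param_measure (hβ.comp measurable_fst) measurable_snd) ?_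
    exact (((Measure.measurable_coe MeasurableSet.univ).comp
      (hβ.comp measurable_fst)).add measurable_const).inv
  · intro p
    rw [Measure.smul_apply, smul_eq_mul, param_univ]
    exact ENNReal.inv_mul_le_one _
  · exact measurable_snoc_uncurry.comp
      ((measurable_snd.comp measurable_fst).prodMk measurable_snd)

lemma measurable_polyaStep (α : Measure A) (n : ℕ) : Measurable (polyaStep α n) := by
  have h := measurable_polyaStep_family (γ := Unit) (β := fun _ => α) measurable_const n
  exact h.comp (measurable_prodMk_left (x := ()))

lemma polyaMeasure_univ_le (α : Measure A) : ∀ n, polyaMeasure α n Set.univ ≤ 1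
  | 0 => by simp [polyaMeasure]
  | (n + 1) => by
    rw [polyaMeasure_succ,
      Measure.bind_apply MeasurableSet.univ (measurable_polyaStep α n).aemeasurable]
    calc ∫⁻ a, polyaStep α n a Set.univ ∂polyaMeasure α n
        ≤ ∫⁻ _, 1 ∂polyaMeasure α n := lintegral_mono fun a => polyaStep_univ_le α n a
      _ = polyaMeasure α n Set.univ := lintegral_one
      _ ≤ 1 := polyaMeasure_univ_le α n

lemma measurable_polya_param {γ : Type*} [MeasurableSpace γ] {β : γ → Measure A}
    (hβ : Measurable β) (n : ℕ) :
    Measurable fun c => polyaMeasure (β c) n := by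
  induction n with
  | zero => exact measurable_const
  | succ n ih =>
    have : (fun c => polyaMeasure (β c) (n + 1)) =
        fun c => (polyaMeasure (β c) n).bind (polyaStep (β c) n) := rfl
    rw [this]
    exact measurable_bind_family ih (fun c => polyaMeasure_univ_le (β c) n)
      (measurable_polyaStep_family hβ n)

end PolyaAux

lemma bind_map_comm {B C D : Type*} [MeasurableSpace B] [MeasurableSpace C]
    [MeasurableSpace D] (μ : Measure B) {f : B → C} {g : C → Measure D}
    (hf : Measurable f) (hg : Measurable g) :
    (μ.map f).bind g = μ.bind (fun x => g (f x)) := by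
  rw [← Measure.bind_dirac_eq_map μ hf,
    Measure.bind_bind (f := fun x => Measure.dirac (f x))
      (Measure.measurable_dirac.comp hf).aemeasurable hg.aemeasurable]
  simp_rw [Measure.dirac_bind hg]

lemma map_bind_comm {B C D : Type*} [MeasurableSpace B] [MeasurableSpace C]
    [MeasurableSpace D] (μ : Measure B) {f : B → Measure C} {g : C → D}
    (hf : Measurable f) (hg : Measurable g) :
    (μ.bind f).map g = μ.bind (fun x => (f x).map g) := by
  rw [← Measure.bind_dirac_eq_map _ hg,
    Measure.bind_bind (g := fun x => Measure.dirac (g x)) hf.aemeasurable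
      (Measure.measurable_dirac.comp hg).aemeasurable]
  simp_rw [Measure.bind_dirac_eq_map _ hg]

lemma polyaStep_append (α : Measure A) (k m : ℕ) (a : Fin k → A) (b : Fin m → A) :
    polyaStep α (k + m) (Fin.append a b) =
      (polyaStep (α + ∑ l : Fin k, Measure.dirac (a l)) m b).map
        (fun c => Fin.append a c) := by
  have hsc : ((α + ∑ l : Fin k, Measure.dirac (a l)) Set.univ + (m : ℝ≥0∞)) =
      α Set.univ + ((k + m : ℕ) : ℝ≥0∞) := by
    rw [param_univ]; push_cast; ring
  have hms : (α + ∑ i : Fin (k + m), Measure.dirac (Fin.append a b i)) =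
      (α + ∑ l : Fin k, Measure.dirac (a l)) + ∑ i : Fin m, Measure.dirac (b i) := by
    rw [Fin.sum_univ_add]
    simp only [Fin.append_left, Fin.append_right]
    exact (add_assoc _ _ _).symm
  have hfun : (fun x : A => (Fin.snoc (Fin.append a b) x : Fin (k + m + 1) → A)) =
      fun x => Fin.append a (Fin.snoc b x) := by
    funext x
    exact (Fin.append_snoc a b x).symm
  rw [polyaStep, polyaStep,
    Measure.map_map (measurable_append_left a) (measurable_snoc_left b),
    hms, ← hsc]
  exact congrFun (congrArg Measure.map hfun) _

set_option linter.unusedVariables false in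
/-- Conditionally on `X_1 = a_1, …, X_k = a_k`, the continuation `(X_{k+n})_{n≥1}` of a
Pólya sequence with parameter `α` is a Pólya sequence with parameter `α + Σ_{l≤k} δ_{a_l}`:
for all `m`, the joint law of the first `k+m` instants is obtained by first drawing
`(a_1,…,a_k)` from the `k`-dimensional Pólya law and then the next `m` coordinates from
the `m`-dimensional Pólya law with updated parameter `α + Σ_{l=1}^k δ_{a_l}`. -/
theorem polya_conditional_tail (α : Measure A) [IsFiniteMeasure α] (hα : α ≠ 0)
    (k : ℕ) (hk : 1 ≤ k) (m : ℕ) :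
    polyaMeasure α (k + m) =
      (polyaMeasure α k).bind (fun a =>
        (polyaMeasure (α + ∑ l : Fin k, Measure.dirac (a l)) m).map
          (fun b => Fin.append a b)) := by
  induction m with
  | zero =>
    have happ : ∀ a : Fin k → A,
        (Fin.append a (fun i : Fin 0 => i.elim0) : Fin (k + 0) → A) = a := by
      intro a
      funext j
      rw [show (fun i : Fin 0 => i.elim0) = (Fin.elim0 : Fin 0 → A) from rfl,
        Fin.append_elim0]
      rfl
    have h0 : ∀ a : Fin k → A,
        (polyaMeasure (α + ∑ l : Fin k, Measure.dirac (a l)) 0).map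
          (fun b => Fin.append a b) = Measure.dirac a := by
      intro a
      rw [show polyaMeasure (α + ∑ l : Fin k, Measure.dirac (a l)) 0 =
          Measure.dirac (fun i : Fin 0 => i.elim0) from rfl,
        Measure.map_dirac' (measurable_append_left a), happ a]
    simp only [h0]
    exact Measure.bind_dirac.symm
  | succ m ih =>
    have hβ : Measurable fun a : Fin k → A => α + ∑ l : Fin k, Measure.dirac (a l) :=
      measurable_param_measure measurable_const measurable_id
    have hmap : Measurable fun a : Fin k → A =>
        (polyaMeasure (α + ∑ l : Fin k, Measure.dirac (a l)) m).map
          (fun b => Fin.append a b) := by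
      refine measurable_map_family (measurable_polya_param hβ m)
        (fun a => polyaMeasure_univ_le _ _) ?_
      exact measurable_append_uncurry
    calc polyaMeasure α (k + (m + 1))
        = (polyaMeasure α (k + m)).bind (polyaStep α (k + m)) := rfl
      _ = ((polyaMeasure α k).bind fun a =>
            (polyaMeasure (α + ∑ l : Fin k, Measure.dirac (a l)) m).map
              (fun b => Fin.append a b)).bind (polyaStep α (k + m)) := by rw [← ih]
      _ = (polyaMeasure α k).bind (fun a =>
            ((polyaMeasure (α + ∑ l : Fin k, Measure.dirac (a l)) m).map
              (fun b => Fin.append a b)).bind (polyaStep α (k + m))) :=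
          Measure.bind_bind hmap.aemeasurable (measurable_polyaStep α (k + m)).aemeasurable
      _ = (polyaMeasure α k).bind (fun a =>
            (polyaMeasure (α + ∑ l : Fin k, Measure.dirac (a l)) m).bind
              (fun b => polyaStep α (k + m) (Fin.append a b))) := by
          refine congrArg _ (funext fun a => ?_)
          exact bind_map_comm _ (measurable_append_left a) (measurable_polyaStep α (k + m))
      _ = (polyaMeasure α k).bind (fun a =>
            (polyaMeasure (α + ∑ l : Fin k, Measure.dirac (a l)) m).bind
              (fun b => (polyaStep (α + ∑ l : Fin k, Measure.dirac (a l)) m b).map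
                (fun c => Fin.append a c))) := by
          refine congrArg _ (funext fun a => ?_)
          refine congrArg _ (funext fun b => ?_)
          exact polyaStep_append α k m a b
      _ = (polyaMeasure α k).bind (fun a =>
            ((polyaMeasure (α + ∑ l : Fin k, Measure.dirac (a l)) m).bind
              (polyaStep (α + ∑ l : Fin k, Measure.dirac (a l)) m)).map
                (fun b => Fin.append a b)) := by
          refine congrArg _ (funext fun a => ?_)
          exact (map_bind_comm _ (measurable_polyaStep _ m) (measurable_append_left a)).symm
      _ = (polyaMeasure α k).bind (fun a =>
            (polyaMeasure (α + ∑ l : Fin k, Measure.dirac (a l)) (m + 1)).map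
              (fun b => Fin.append a b)) := rfl
end
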